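/- Let h : ℝⁿ → ℝⁿ be continuous, let P = [p⁻, p⁺] ⊆ ℝⁿ be a compact box, let H = [H⁻, H⁺] ⊆ ℝⁿ be a box with h(ξ) ∈ H for all ξ ∈ P, and let R ⊆ ℝⁿ. Suppose the fixpoint inclusion R + [0, Δt]·H ⊆ int(P) holds, where R + [0, Δt]·H = {r + s·v : r ∈ R, s ∈ [0, Δt], v ∈ H} and int denotes the interior. Then every solution x : [0, Δt] → ℝⁿ of ẋ(t) = h(x(t)) with x(0) ∈ R satisfies x(t) ∈ P for all t ∈ [0, Δt]; i.e., P is a valid rough enclosure of the trajectory over the time step. -/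

import Mathlib

/-- **validity of the rough enclosure `𝒫`.** Let `h` be continuous,
`P = [p⁻, p⁺]` a (compact) box, `H = [H⁻, H⁺]` a box with `h(ξ) ∈ H` for all
`ξ ∈ P`, and `R` a set with the fixpoint inclusion `R + [0, Δt]·H ⊆ int P`.
Then every solution of `ẋ = h(x)` on `[0, Δt]` starting in `R` stays in `P`. -/
theorem rough_enclosure_valid
    (n : ℕ) (h : (Fin n → ℝ) → (Fin n → ℝ)) (hcont : Continuous h)
    (pl pu Hl Hu : Fin n → ℝ) (hHle : ∀ k, Hl k ≤ Hu k)
    (R : Set (Fin n → ℝ)) (Δt : ℝ) (hΔt : 0 ≤ Δt)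
    (hH : ∀ ξ ∈ Set.Icc pl pu, h ξ ∈ Set.Icc Hl Hu)
    (hfix : ∀ r ∈ R, ∀ s ∈ Set.Icc (0 : ℝ) Δt, ∀ v ∈ Set.Icc Hl Hu,
      r + s • v ∈ interior (Set.Icc pl pu))
    (x : ℝ → Fin n → ℝ)
    (hx : ∀ t ∈ Set.Icc (0 : ℝ) Δt, HasDerivAt x (h (x t)) t)
    (hx0 : x 0 ∈ R) :
    ∀ t ∈ Set.Icc (0 : ℝ) Δt, x t ∈ Set.Icc pl pu := by
  set P := Set.Icc pl pu with hPdef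
  have hHlmem : Hl ∈ Set.Icc Hl Hu := ⟨le_rfl, fun k => hHle k⟩
  have h0int : x 0 ∈ interior P := by
    have := hfix (x 0) hx0 0 ⟨le_rfl, hΔt⟩ Hl hHlmem
    simpa using this
  -- Key estimate: if x stays in P on [0,t], then x t ∈ interior P.
  have key : ∀ t ∈ Set.Icc (0:ℝ) Δt, (∀ s ∈ Set.Icc (0:ℝ) t, x s ∈ P) →
      x t ∈ interior P := by
    intro t ht hst
    rcases eq_or_lt_of_le ht.1 with h0 | h0
    · rw [← h0]; exact h0int
    · set v : Fin n → ℝ := fun k => (x t k - x 0 k) / t with hv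
      have hbnd : ∀ k, t * Hl k ≤ x t k - x 0 k ∧ x t k - x 0 k ≤ t * Hu k := by
        intro k
        set m : ℝ := (Hl k + Hu k) / 2 with hm
        have hd : ∀ s ∈ Set.Icc (0:ℝ) t,
            HasDerivWithinAt (fun s => x s k - s * m) ((h (x s)) k - m) (Set.Icc 0 t) s := by
          intro s hs
          have hs' : s ∈ Set.Icc (0:ℝ) Δt := ⟨hs.1, hs.2.trans ht.2⟩
          have h1 : HasDerivAt (fun s => x s k) ((h (x s)) k) s :=
            hasDerivAt_pi.1 (hx s hs') k
          have h2 : HasDerivAt (fun s => x s k - s * m) ((h (x s)) k - m) s := by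
            exact (h1.sub ((hasDerivAt_id' s).mul_const m)).congr_deriv (by ring)
          exact h2.hasDerivWithinAt
        have bound : ∀ s ∈ Set.Ico (0:ℝ) t, ‖(h (x s)) k - m‖ ≤ (Hu k - Hl k) / 2 := by
          intro s hs
          have hsP : x s ∈ P := hst s ⟨hs.1, le_of_lt hs.2⟩
          have := hH (x s) hsP
          have h1 : Hl k ≤ (h (x s)) k := this.1 k
          have h2 : (h (x s)) k ≤ Hu k := this.2 k
          rw [Real.norm_eq_abs, abs_le]
          constructor <;> simp [hm] <;> linarith
        have := norm_image_sub_le_of_norm_deriv_le_segment' hd bound t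
          ⟨le_of_lt h0, le_rfl⟩
        simp only [Real.norm_eq_abs, sub_zero, zero_mul] at this
        rw [abs_le] at this
        have h1 := this.1
        have h2 := this.2
        constructor <;> [nlinarith; nlinarith]
      have hvmem : v ∈ Set.Icc Hl Hu := by
        constructor <;> intro k
        · rw [hv]; exact (le_div_iff₀ h0).2 (by have := (hbnd k).1; linarith)
        · rw [hv]; exact (div_le_iff₀ h0).2 (by have := (hbnd k).2; linarith)
      have hxt : x t = x 0 + t • v := by
        funext k
        simp only [Pi.add_apply, Pi.smul_apply, smul_eq_mul, hv]
        field_simp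
        ring
      rw [hxt]
      exact hfix (x 0) hx0 t ht v hvmem
  -- Main argument by contradiction using the infimum of bad times.
  by_contra hcon
  push_neg at hcon
  obtain ⟨t₀, ht₀, ht₀P⟩ := hcon
  set B : Set ℝ := {t | t ∈ Set.Icc (0:ℝ) Δt ∧ x t ∉ P} with hB
  have hBne : B.Nonempty := ⟨t₀, ht₀, ht₀P⟩
  have hBbdd : BddBelow B := ⟨0, fun b hb => hb.1.1⟩
  set τ := sInf B with hτ
  have hτmem : τ ∈ Set.Icc (0:ℝ) Δt := by
    constructor
    · exact le_csInf hBne fun b hb => hb.1.1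
    · exact le_trans (csInf_le hBbdd ⟨ht₀, ht₀P⟩) ht₀.2
  have hbefore : ∀ s ∈ Set.Icc (0:ℝ) Δt, s < τ → x s ∈ P := by
    intro s hs hsτ
    by_contra hsP
    exact absurd (csInf_le hBbdd ⟨hs, hsP⟩) (not_le.2 hsτ)
  have hτP : ∀ s ∈ Set.Icc (0:ℝ) τ, x s ∈ P := by
    intro s hs
    rcases lt_or_eq_of_le hs.2 with hlt | heq
    · exact hbefore s ⟨hs.1, hs.2.trans hτmem.2⟩ hlt
    · subst heq
      rcases eq_or_lt_of_le hτmem.1 with h0 | h0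
      · rw [← h0]; exact interior_subset h0int
      · -- x τ ∈ P by closedness: x is continuous at τ and x s ∈ P for s < τ
        have hca : ContinuousAt x τ := (hx τ hτmem).continuousAt
        have hne : (nhdsWithin τ (Set.Ico 0 τ)).NeBot := by
          apply mem_closure_iff_nhdsWithin_neBot.1
          rw [closure_Ico (ne_of_lt h0)]
          exact ⟨le_of_lt h0, le_rfl⟩
        have htend : Filter.Tendsto x (nhdsWithin τ (Set.Ico 0 τ)) (nhds (x τ)) :=
          hca.continuousWithinAt
        refine isClosed_Icc.mem_of_tendsto htend ?_
        filter_upwards [self_mem_nhdsWithin] with s hs'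
        exact hbefore s ⟨hs'.1, (le_of_lt hs'.2).trans hτmem.2⟩ hs'.2
  have hτint : x τ ∈ interior P := key τ hτmem hτP
  have hca : ContinuousAt x τ := (hx τ hτmem).continuousAt
  have hev : ∀ᶠ s in nhds τ, x s ∈ interior P :=
    hca.eventually_mem (isOpen_interior.mem_nhds hτint)
  rw [Metric.eventually_nhds_iff] at hev
  obtain ⟨ε, hε, hball⟩ := hev
  have hge : ∀ b ∈ B, τ + ε / 2 ≤ b := by
    intro b hb
    by_contra hlt
    push_neg at hlt
    have hbτ : τ ≤ b := csInf_le hBbdd hb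
    have : dist b τ < ε := by
      rw [Real.dist_eq, abs_of_nonneg (by linarith)]; linarith
    exact hb.2 (interior_subset (hball this))
  have : τ + ε / 2 ≤ τ := le_csInf hBne hge
  linarith
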